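/- Let d ≥ 2, let Z be a finite set, p : Z → ℝ with p_z ≥ 0 and Σ_z p_z = 1, let (ρ^Q_z)_{z∈Z} be a family of d×d density matrices, and let (φ_z)_{z∈Z} be a family of unit vectors in ℂ^d. Define the average infidelity δ̄ = 1 − Σ_z p_z ⟨φ_z| ρ^Q_z |φ_z⟩, which lies in [0,1]. Then the average von Neumann entropy satisfies Σ_z p_z S(ρ^Q_z) ≤ H₂(δ̄) + δ̄ · log(d−1), where H₂(x) = −x log x − (1−x) log(1−x) is the binary entropy function (with 0·log 0 = 0). -/

import Mathlib

open Matrix ComplexOrder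

/-- The matrix logarithm of a Hermitian matrix, defined through its spectral
decomposition (with `Real.log 0 = 0` as convention on null eigenvalues); junk value `0`
on non-Hermitian input. -/
noncomputable def matLog {n : Type*} [Fintype n] [DecidableEq n] (A : Matrix n n ℂ) :
    Matrix n n ℂ :=
  if h : A.IsHermitian then
    (h.eigenvectorUnitary : Matrix n n ℂ) *
      Matrix.diagonal (fun i => (Real.log (h.eigenvalues i) : ℂ)) *
      (h.eigenvectorUnitary : Matrix n n ℂ)ᴴ
  else 0

/-- The von Neumann entropy `S(ρ) = −Tr[ρ log ρ]` (with the convention `0·log 0 = 0`). -/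
noncomputable def vnEntropy {n : Type*} [Fintype n] [DecidableEq n]
    (ρ : Matrix n n ℂ) : ℝ :=
  -((ρ * matLog ρ).trace).re

lemma vnEntropy_eq {n : Type*} [Fintype n] [DecidableEq n] {ρ : Matrix n n ℂ}
    (h : ρ.IsHermitian) :
    vnEntropy ρ = ∑ i, Real.negMulLog (h.eigenvalues i) := by
  unfold vnEntropy matLog
  rw [dif_pos h]
  set U : Matrix n n ℂ := (h.eigenvectorUnitary : Matrix n n ℂ) with hUdef
  have hU1 : U * Uᴴ = 1 := by
    rw [← Matrix.star_eq_conjTranspose]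
    exact (Matrix.mem_unitaryGroup_iff).mp h.eigenvectorUnitary.2
  have hU2 : Uᴴ * U = 1 := by
    rw [← Matrix.star_eq_conjTranspose]
    exact (Matrix.mem_unitaryGroup_iff').mp h.eigenvectorUnitary.2
  have hρ : ρ = U * Matrix.diagonal (fun i => (h.eigenvalues i : ℂ)) * Uᴴ := by
    conv_lhs => rw [h.spectral_theorem]
    rw [Unitary.conjStarAlgAut_apply, Matrix.star_eq_conjTranspose]
    rfl
  have key : ρ *
      (U * Matrix.diagonal (fun i => (Real.log (h.eigenvalues i) : ℂ)) * Uᴴ)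
      = U * (Matrix.diagonal fun i => ((h.eigenvalues i : ℂ) * (Real.log (h.eigenvalues i) : ℂ))) * Uᴴ := by
    conv_lhs => lhs; rw [hρ]
    rw [← Matrix.diagonal_mul_diagonal]
    simp only [Matrix.mul_assoc]
    rw [← Matrix.mul_assoc Uᴴ U, hU2, Matrix.one_mul]
  rw [key, Matrix.trace_mul_cycle, hU2, Matrix.one_mul, Matrix.trace_diagonal]
  rw [Complex.re_sum]
  rw [← Finset.sum_neg_distrib]
  apply Finset.sum_congr rfl
  intro i _
  simp [Real.negMulLog]

lemma sum_negMulLog_le_mix {n : Type*} [Fintype n]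
    (D : n → n → ℝ) (hD0 : ∀ i j, 0 ≤ D i j)
    (hrow : ∀ i, ∑ j, D i j = 1) (hcol : ∀ j, ∑ i, D i j = 1)
    (lam : n → ℝ) (hlam : ∀ j, 0 ≤ lam j) :
    ∑ j, Real.negMulLog (lam j) ≤ ∑ i, Real.negMulLog (∑ j, D i j * lam j) := by
  have h1 : ∑ j, Real.negMulLog (lam j) = ∑ i, ∑ j, D i j * Real.negMulLog (lam j) := by
    rw [Finset.sum_comm]
    apply Finset.sum_congr rfl
    intro j _
    rw [← Finset.sum_mul, hcol, one_mul]
  rw [h1]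
  apply Finset.sum_le_sum
  intro i _
  have := Real.concaveOn_negMulLog.le_map_sum (t := Finset.univ) (w := D i) (p := lam)
    (fun j _ => hD0 i j) (hrow i) (fun j _ => hlam j)
  simpa [smul_eq_mul] using this

lemma shannon_tail_bound {n : Type*} [Fintype n] [DecidableEq n] (k : n)
    (hcard : 2 ≤ Fintype.card n) (q : n → ℝ)
    (hq0 : ∀ i, 0 ≤ q i) (hq1 : ∑ i, q i = 1) :
    ∑ i, Real.negMulLog (q i)
      ≤ Real.negMulLog (q k) + Real.negMulLog (1 - q k)
        + (1 - q k) * Real.log ((Fintype.card n : ℝ) - 1) := by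
  classical
  set δ := 1 - q k with hδdef
  set s := Finset.univ.erase k with hs
  have hδ : ∑ i ∈ s, q i = δ := by
    rw [hs, Finset.sum_erase_eq_sub (Finset.mem_univ k), hq1]
  have hδ0 : 0 ≤ δ := by
    rw [← hδ]; exact Finset.sum_nonneg fun i _ => hq0 i
  set m : ℕ := Fintype.card n - 1 with hm
  have hscard : s.card = m := by
    rw [hs, Finset.card_erase_of_mem (Finset.mem_univ k), Finset.card_univ]
  have hm0 : (0:ℝ) < m := by
    have : 1 ≤ m := by omega
    exact_mod_cast this
  have hmcast : (m : ℝ) = (Fintype.card n : ℝ) - 1 := by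
    have : 1 ≤ Fintype.card n := by omega
    push_cast [hm, this]
    ring
  have jensen := Real.concaveOn_negMulLog.le_map_sum (t := s) (w := fun _ => (m:ℝ)⁻¹)
    (p := q) (fun i _ => by positivity) (by
      rw [Finset.sum_const, hscard, nsmul_eq_mul, mul_inv_cancel₀ (ne_of_gt hm0)])
    (fun i _ => hq0 i)
  have hsum : ∑ i ∈ s, (m:ℝ)⁻¹ • q i = δ * (m:ℝ)⁻¹ := by
    simp only [smul_eq_mul, ← Finset.mul_sum, hδ]; ring
  rw [hsum] at jensen
  have htail : ∑ i ∈ s, Real.negMulLog (q i) ≤ (m:ℝ) * Real.negMulLog (δ * (m:ℝ)⁻¹) := by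
    have h2 : ∑ i ∈ s, (m:ℝ)⁻¹ • Real.negMulLog (q i)
        = (m:ℝ)⁻¹ * ∑ i ∈ s, Real.negMulLog (q i) := by
      simp [Finset.mul_sum]
    rw [h2] at jensen
    calc ∑ i ∈ s, Real.negMulLog (q i)
        = (m:ℝ) * ((m:ℝ)⁻¹ * ∑ i ∈ s, Real.negMulLog (q i)) := by
          field_simp
      _ ≤ (m:ℝ) * Real.negMulLog (δ * (m:ℝ)⁻¹) := by
          apply mul_le_mul_of_nonneg_left jensen (le_of_lt hm0)
  have hident : (m:ℝ) * Real.negMulLog (δ * (m:ℝ)⁻¹)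
      = Real.negMulLog δ + δ * Real.log ((Fintype.card n : ℝ) - 1) := by
    rcases eq_or_lt_of_le hδ0 with h0 | h0
    · simp [← h0, Real.negMulLog]
    · rw [← hmcast, Real.negMulLog, Real.negMulLog, Real.log_mul (ne_of_gt h0)
        (by positivity), Real.log_inv]
      field_simp
      ring
  calc ∑ i, Real.negMulLog (q i)
      = Real.negMulLog (q k) + ∑ i ∈ s, Real.negMulLog (q i) := by
        exact (Finset.add_sum_erase _ _ (Finset.mem_univ k)).symm
    _ ≤ Real.negMulLog (q k) + ((m:ℝ) * Real.negMulLog (δ * (m:ℝ)⁻¹)) := by linarith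
    _ = Real.negMulLog (q k) + Real.negMulLog (1 - q k)
        + (1 - q k) * Real.log ((Fintype.card n : ℝ) - 1) := by
        rw [hident, hδdef]; ring


lemma diag_re_nonneg {n : Type*} [Fintype n] [DecidableEq n] {A : Matrix n n ℂ}
    (hA : A.PosSemidef) (i : n) : 0 ≤ (A i i).re := by
  have h1 := hA.re_dotProduct_nonneg (Pi.single i 1)
  simpa [dotProduct, Matrix.mulVec, Pi.single_apply, Finset.sum_ite_eq,
    Finset.sum_ite_eq', mul_ite, ite_mul] using h1

lemma vnEntropy_le_sum_diag {n : Type*} [Fintype n] [DecidableEq n]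
    {ρ V : Matrix n n ℂ} (hρ : ρ.PosSemidef)
    (hV1 : Vᴴ * V = 1) (hV2 : V * Vᴴ = 1) :
    vnEntropy ρ ≤ ∑ i, Real.negMulLog (((Vᴴ * ρ * V) i i).re) := by
  set U : Matrix n n ℂ := (hρ.1.eigenvectorUnitary : Matrix n n ℂ) with hU_def
  have hU1 : U * Uᴴ = 1 := by
    rw [← Matrix.star_eq_conjTranspose]
    exact Matrix.mem_unitaryGroup_iff.mp hρ.1.eigenvectorUnitary.2
  have hU2 : Uᴴ * U = 1 := by
    rw [← Matrix.star_eq_conjTranspose]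
    exact Matrix.mem_unitaryGroup_iff'.mp hρ.1.eigenvectorUnitary.2
  set W : Matrix n n ℂ := Uᴴ * V with hW_def
  have hWct : Wᴴ = Vᴴ * U := by
    rw [hW_def, Matrix.conjTranspose_mul, Matrix.conjTranspose_conjTranspose]
  have hW1 : Wᴴ * W = 1 := by
    rw [hWct, hW_def, Matrix.mul_assoc, ← Matrix.mul_assoc U Uᴴ V, hU1,
      Matrix.one_mul, hV1]
  have hW2 : W * Wᴴ = 1 := by
    rw [hWct, hW_def, Matrix.mul_assoc, ← Matrix.mul_assoc V Vᴴ U, hV2,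
      Matrix.one_mul, hU2]
  set lam : n → ℝ := hρ.1.eigenvalues with hlam_def
  set D : Matrix n n ℂ := Matrix.diagonal (fun i => (lam i : ℂ)) with hD_def
  have hspec : ρ = U * D * Uᴴ := by
    conv_lhs => rw [hρ.1.spectral_theorem]
    rw [Unitary.conjStarAlgAut_apply, Matrix.star_eq_conjTranspose]
    rfl
  have hdiag : Vᴴ * ρ * V = Wᴴ * (D * W) := by
    calc Vᴴ * ρ * V = Vᴴ * (U * D * Uᴴ) * V := by conv_lhs => rw [hspec]
      _ = Wᴴ * (D * W) := by
          rw [hWct, hW_def]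
          simp only [Matrix.mul_assoc]
  have hterm : ∀ i j, ((Wᴴ i j) * ((D * W) j i)).re
      = Complex.normSq (W j i) * lam j := by
    intro i j
    rw [Matrix.conjTranspose_apply, hD_def, Matrix.diagonal_mul]
    have : (star (W j i)) * ((lam j : ℂ) * W j i)
        = ((Complex.normSq (W j i) * lam j : ℝ) : ℂ) := by
      push_cast
      rw [Complex.normSq_eq_conj_mul_self, Complex.star_def]
      ring
    rw [this, Complex.ofReal_re]
  have hentry : ∀ i, ((Vᴴ * ρ * V) i i).re = ∑ j, Complex.normSq (W j i) * lam j := by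
    intro i
    rw [hdiag, Matrix.mul_apply, Complex.re_sum]
    exact Finset.sum_congr rfl fun j _ => hterm i j
  have hrow : ∀ i, ∑ j, Complex.normSq (W j i) = 1 := by
    intro i
    have h1 : (Wᴴ * W) i i = 1 := by rw [hW1]; simp
    rw [Matrix.mul_apply] at h1
    have h2 : ∀ j, Wᴴ i j * W j i = ((Complex.normSq (W j i) : ℝ) : ℂ) := by
      intro j
      rw [Matrix.conjTranspose_apply, Complex.normSq_eq_conj_mul_self, Complex.star_def]
    rw [Finset.sum_congr rfl fun j _ => h2 j] at h1
    have := congrArg Complex.re h1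
    rwa [Complex.re_sum] at this
    
  have hcol : ∀ j, ∑ i, Complex.normSq (W j i) = 1 := by
    intro j
    have h1 : (W * Wᴴ) j j = 1 := by rw [hW2]; simp
    rw [Matrix.mul_apply] at h1
    have h2 : ∀ i, W j i * Wᴴ i j = ((Complex.normSq (W j i) : ℝ) : ℂ) := by
      intro i
      rw [Matrix.conjTranspose_apply, Complex.normSq_eq_conj_mul_self, Complex.star_def]
      ring
    rw [Finset.sum_congr rfl fun i _ => h2 i] at h1
    have := congrArg Complex.re h1
    rwa [Complex.re_sum] at this
  rw [vnEntropy_eq hρ.1]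
  have hmix := sum_negMulLog_le_mix (fun i j => Complex.normSq (W j i))
    (fun i j => Complex.normSq_nonneg _) hrow
    (fun j => hcol j) lam (fun j => hρ.eigenvalues_nonneg j)
  calc ∑ i, Real.negMulLog (hρ.1.eigenvalues i)
      ≤ ∑ i, Real.negMulLog (∑ j, Complex.normSq (W j i) * lam j) := hmix
    _ = ∑ i, Real.negMulLog (((Vᴴ * ρ * V) i i).re) := by
        exact Finset.sum_congr rfl fun i _ => by rw [hentry i]

lemma key_entropy_bound {d : ℕ} (hd : 2 ≤ d)
    {ρ : Matrix (Fin d) (Fin d) ℂ} (hρ : ρ.PosSemidef) (ht : ρ.trace = 1)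
    {φ : Fin d → ℂ} (hφ : star φ ⬝ᵥ φ = 1) :
    (0 ≤ (star φ ⬝ᵥ (ρ *ᵥ φ)).re ∧ (star φ ⬝ᵥ (ρ *ᵥ φ)).re ≤ 1) ∧
    vnEntropy ρ ≤ Real.negMulLog ((star φ ⬝ᵥ (ρ *ᵥ φ)).re)
      + Real.negMulLog (1 - (star φ ⬝ᵥ (ρ *ᵥ φ)).re)
      + (1 - (star φ ⬝ᵥ (ρ *ᵥ φ)).re) * Real.log ((d:ℝ) - 1) := by
  classical
  set F : ℝ := (star φ ⬝ᵥ (ρ *ᵥ φ)).re with hF_def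
  set k : Fin d := ⟨0, by omega⟩ with hk_def
  set v : EuclideanSpace ℂ (Fin d) := (WithLp.equiv 2 _).symm φ with hv_def
  have hv : Orthonormal ℂ (Set.restrict {k} (fun _ : Fin d => v)) := by
    rw [orthonormal_iff_ite]
    rintro ⟨i, hi⟩ ⟨j, hj⟩
    simp only [Set.mem_singleton_iff] at hi hj
    subst hi; subst hj
    simp only [Set.restrict_apply, if_pos rfl]
    rw [hv_def, WithLp.equiv_symm_apply, EuclideanSpace.inner_toLp_toLp, dotProduct_comm]
    simp only [Set.restrict_apply, WithLp.ofLp_toLp, hφ]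
    simp
    exact hφ
  obtain ⟨b, hb⟩ := hv.exists_orthonormalBasis_extension_of_card_eq (by simp)
  have hbk : b k = v := hb k rfl
  set V : Matrix (Fin d) (Fin d) ℂ :=
    (EuclideanSpace.basisFun (Fin d) ℂ).toBasis.toMatrix b.toBasis with hV_def
  have hVunit : V ∈ Matrix.unitaryGroup (Fin d) ℂ :=
    (EuclideanSpace.basisFun (Fin d) ℂ).toMatrix_orthonormalBasis_mem_unitary b
  have hV1 : Vᴴ * V = 1 := by
    rw [← Matrix.star_eq_conjTranspose]; exact Matrix.mem_unitaryGroup_iff'.mp hVunit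
  have hV2 : V * Vᴴ = 1 := by
    rw [← Matrix.star_eq_conjTranspose]; exact Matrix.mem_unitaryGroup_iff.mp hVunit
  have hVk : ∀ x, V x k = φ x := by
    intro x
    show (WithLp.equiv 2 _) (b k) x = φ x
    rw [hbk, hv_def]
    simp
  set M : Matrix (Fin d) (Fin d) ℂ := Vᴴ * ρ * V with hM_def
  have hMpsd : M.PosSemidef := hρ.conjTranspose_mul_mul_same V
  have hq0 : ∀ i, 0 ≤ (M i i).re := fun i => diag_re_nonneg hMpsd i
  have htrM : M.trace = 1 := by
    rw [hM_def, Matrix.trace_mul_cycle, hV2, Matrix.one_mul, ht]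
  have hqsum : ∑ i, (M i i).re = 1 := by
    have h1 : (M.trace).re = 1 := by rw [htrM]; simp
    rw [Matrix.trace, Complex.re_sum] at h1
    exact h1
  have hqk : (M k k).re = F := by
    rw [hF_def]
    congr 1
    have h2 : ∀ x, (ρ * V) x k = (ρ *ᵥ φ) x := by
      intro x
      simp [Matrix.mul_apply, Matrix.mulVec, dotProduct, hVk]
    rw [hM_def, Matrix.mul_assoc, Matrix.mul_apply]
    simp only [Matrix.conjTranspose_apply, h2, hVk]
    simp [dotProduct]
  have hF0 : 0 ≤ F := by rw [← hqk]; exact hq0 k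
  have hF1 : F ≤ 1 := by
    rw [← hqk, ← hqsum]
    exact Finset.single_le_sum (fun i _ => hq0 i) (Finset.mem_univ k)
  refine ⟨⟨hF0, hF1⟩, ?_⟩
  have hstep1 := vnEntropy_le_sum_diag hρ hV1 hV2
  have hstep2 := shannon_tail_bound k (by simp [hd]) (fun i => (M i i).re) hq0 hqsum
  simp only [Fintype.card_fin] at hstep2
  rw [hqk] at hstep2
  calc vnEntropy ρ ≤ ∑ i, Real.negMulLog ((M i i).re) := hstep1
    _ ≤ Real.negMulLog F + Real.negMulLog (1 - F) + (1 - F) * Real.log ((d:ℝ) - 1) :=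
        hstep2

/-- **Regularized entropy upper bound for pure classical states (Eq. (38) of the paper).**
If `δ̄ = 1 − Σ_z p_z ⟨φ_z|ρ^Q_z|φ_z⟩` is the average infidelity with a family of unit
vectors `φ_z`, then `δ̄ ∈ [0,1]` and
`Σ_z p_z S(ρ^Q_z) ≤ H₂(δ̄) + δ̄ log(d−1)`. -/
theorem average_entropy_le_binary_entropy_bound
    {Z : Type*} [Fintype Z] {d : ℕ} (hd : 2 ≤ d)
    (p : Z → ℝ) (hp : ∀ z, 0 ≤ p z) (hp1 : ∑ z, p z = 1)
    (ρQ : Z → Matrix (Fin d) (Fin d) ℂ)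
    (hρQ : ∀ z, (ρQ z).PosSemidef ∧ (ρQ z).trace = 1)
    (φ : Z → (Fin d → ℂ))
    (hφ : ∀ z, star (φ z) ⬝ᵥ φ z = 1)
    (δ : ℝ)
    (hδ : δ = 1 - ∑ z, p z * (star (φ z) ⬝ᵥ (ρQ z *ᵥ φ z)).re) :
    (0 ≤ δ ∧ δ ≤ 1) ∧
    ∑ z, p z * vnEntropy (ρQ z)
      ≤ (-(δ * Real.log δ) - (1 - δ) * Real.log (1 - δ)) + δ * Real.log ((d : ℝ) - 1) := by
  have key := fun z => key_entropy_bound hd (hρQ z).1 (hρQ z).2 (hφ z)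
  set F : Z → ℝ := fun z => (star (φ z) ⬝ᵥ (ρQ z *ᵥ φ z)).re with hFdef
  have hδeq : δ = ∑ z, p z * (1 - F z) := by
    rw [hδ, Finset.sum_congr rfl (fun z _ => (mul_one_sub (p z) (F z))),
      Finset.sum_sub_distrib, hp1]
  have hδz01 : ∀ z, 0 ≤ 1 - F z ∧ 1 - F z ≤ 1 := fun z =>
    ⟨by linarith [(key z).1.2], by linarith [(key z).1.1]⟩
  have hδ0 : 0 ≤ δ := by
    rw [hδeq]; exact Finset.sum_nonneg fun z _ => mul_nonneg (hp z) (hδz01 z).1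
  have hδ1 : δ ≤ 1 := by
    rw [hδeq, ← hp1]
    apply Finset.sum_le_sum
    intro z _
    nlinarith [(hδz01 z).2, hp z]
  refine ⟨⟨hδ0, hδ1⟩, ?_⟩
  have hg1 : ConcaveOn ℝ (Set.Icc (0:ℝ) 1) Real.negMulLog :=
    Real.concaveOn_negMulLog.subset Set.Icc_subset_Ici_self (convex_Icc 0 1)
  have hg2 : ConcaveOn ℝ (Set.Icc (0:ℝ) 1) (fun x => Real.negMulLog (1 - x)) := by
    refine ⟨convex_Icc 0 1, ?_⟩
    intro x hx y hy a b ha hb hab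
    have h1 : (0:ℝ) ≤ 1 - x := by linarith [hx.2]
    have h2 : (0:ℝ) ≤ 1 - y := by linarith [hy.2]
    have hcon := Real.concaveOn_negMulLog.2 (Set.mem_Ici.mpr h1) (Set.mem_Ici.mpr h2)
      ha hb hab
    have h3 : a • (1 - x) + b • (1 - y) = 1 - (a • x + b • y) := by
      simp only [smul_eq_mul]
      have : a * (1 - x) + b * (1 - y) = (a + b) - (a * x + b * y) := by ring
      rw [this, hab]
    rw [h3] at hcon
    exact hcon
  have hg : ConcaveOn ℝ (Set.Icc (0:ℝ) 1)
      (fun x => Real.negMulLog x + Real.negMulLog (1 - x)) := hg1.add hg2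
  have hJ : ∑ z, p z • (fun x => Real.negMulLog x + Real.negMulLog (1 - x)) (1 - F z)
      ≤ (fun x => Real.negMulLog x + Real.negMulLog (1 - x)) (∑ z, p z • (1 - F z)) :=
    hg.le_map_sum (fun z _ => hp z) hp1 (fun z _ => Set.mem_Icc.mpr (hδz01 z))
  simp only [smul_eq_mul] at hJ
  calc ∑ z, p z * vnEntropy (ρQ z)
      ≤ ∑ z, p z * (Real.negMulLog (F z) + Real.negMulLog (1 - F z)
          + (1 - F z) * Real.log ((d:ℝ)-1)) := by
        apply Finset.sum_le_sum
        intro z _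
        exact mul_le_mul_of_nonneg_left (key z).2 (hp z)
    _ = (∑ z, p z * (Real.negMulLog (1 - F z) + Real.negMulLog (1 - (1 - F z))))
        + (∑ z, p z * (1 - F z)) * Real.log ((d:ℝ)-1) := by
        rw [Finset.sum_mul, ← Finset.sum_add_distrib]
        apply Finset.sum_congr rfl
        intro z _
        have h4 : 1 - (1 - F z) = F z := by ring
        rw [h4]
        ring
    _ ≤ (Real.negMulLog δ + Real.negMulLog (1 - δ)) + δ * Real.log ((d:ℝ)-1) := by
        rw [← hδeq]
        rw [← hδeq] at hJ
        linarith
    _ = (-(δ * Real.log δ) - (1 - δ) * Real.log (1 - δ)) + δ * Real.log ((d : ℝ) - 1) := by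
        simp [Real.negMulLog]
        ring
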